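/- Let $h$ be the free Dirichlet Schr\"odinger operator on $\mathbb{N}$ and let $g_3[n,m]=\tfrac{5}{24}nm-\tfrac{1}{6}n^3m-\tfrac{1}{6}nm^3$ and $g_1[n,m]=-nm$. Then $hg_3u=-g_1u$ for every finitely supported $u:\mathbb{N}\to\mathbb{C}$. -/
import Mathlib


/-- The free Dirichlet discrete Laplacian on the half-line `ℕ = {1,2,…}`
(the value at the unused index `0` is set to `0`). -/
noncomputable def halfLineOp (u : ℕ → ℂ) : ℕ → ℂ := fun n =>
  if n = 0 then 0
  else if n = 1 then 2 * u 1 - u 2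
  else 2 * u n - u (n + 1) - u (n - 1)


/-- `h g₃ u = -g₁ u`, where `g₃[n,m] = (5/24)nm - (1/6)n³m - (1/6)nm³`
and `g₁[n,m] = -nm`. -/
theorem halfLineOp_g3 (u : ℕ → ℂ) (hu0 : u 0 = 0) (hfin : (Function.support u).Finite) :
    ∀ n : ℕ, 1 ≤ n →
      halfLineOp (fun k => ∑' m : ℕ,
          ((5 / 24 : ℂ) * (k : ℂ) * (m : ℂ) - (1 / 6 : ℂ) * (k : ℂ) ^ 3 * (m : ℂ)
            - (1 / 6 : ℂ) * (k : ℂ) * (m : ℂ) ^ 3) * u m) n =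
        -∑' m : ℕ, (-((n : ℂ) * (m : ℂ))) * u m := by
  intro n hn
  have key : ∀ (c : ℕ → ℂ), ∑' m, c m * u m = ∑ m ∈ hfin.toFinset, c m * u m := by
    intro c
    refine tsum_eq_sum ?_
    intro m hm
    have : u m = 0 := by
      by_contra h
      exact hm (hfin.mem_toFinset.mpr h)
    simp [this]
  have hn0 : n ≠ 0 := by omega
  unfold halfLineOp
  simp only [hn0, if_false]
  by_cases h1 : n = 1
  · subst h1
    rw [if_pos rfl]
    rw [key, key, key]
    rw [Finset.mul_sum, ← Finset.sum_sub_distrib, ← Finset.sum_neg_distrib]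
    refine Finset.sum_congr rfl ?_
    intro m _
    push_cast
    ring
  · simp only [h1, if_false]
    rw [key, key, key, key]
    rw [Finset.mul_sum, ← Finset.sum_sub_distrib, ← Finset.sum_sub_distrib,
      ← Finset.sum_neg_distrib]
    refine Finset.sum_congr rfl ?_
    intro m _
    have h2 : 2 ≤ n := by omega
    have : ((n - 1 : ℕ) : ℂ) = (n : ℂ) - 1 := by
      have h := Nat.cast_sub (R := ℂ) (by omega : 1 ≤ n)
      simpa using h
    rw [this]
    push_cast
    ring
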